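/- (Performance difference) For any two policies π, π' on a finite discounted MDP and any start distribution μ, V^{π'}(μ) − V^{π}(μ) = (1/(1−γ)) ∑_{s,a} d^{π'}_μ(s) π'(a|s) [Q^π(s,a) − V^π(s)], where d^{π'}_μ(s) = (1−γ)∑_{k≥0} γ^k P^{π'}(S_k = s | S_0 ∼ μ). -/

import Mathlib

/-- One-step expectation operator under policy `π`: `(T^π f)(s) = E[f(S_1) | S_0 = s]`. -/
noncomputable def stepOp {S A : Type*} [Fintype S] [Fintype A]
    (P : S → A → S → ℝ) (π : S → A → ℝ) (f : S → ℝ) : S → ℝ :=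
  fun s => ∑ a, π s a * ∑ s', P s a s' * f s'

/-- Discounted value function `V^π(s) = ∑_{k≥0} γ^k E[r^π(S_k) | S_0 = s]`. -/
noncomputable def Vpi {S A : Type*} [Fintype S] [Fintype A]
    (P : S → A → S → ℝ) (R : S → A → ℝ) (γ : ℝ) (π : S → A → ℝ) (s : S) : ℝ :=
  ∑' k : ℕ, γ ^ k * ((stepOp P π)^[k] (fun t => ∑ a, π t a * R t a)) s

/-- Discounted action-value function `Q^π(s,a) = R(s,a) + γ ∑_{s'} P(s'|s,a) V^π(s')`. -/
noncomputable def Qpi {S A : Type*} [Fintype S] [Fintype A]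
    (P : S → A → S → ℝ) (R : S → A → ℝ) (γ : ℝ) (π : S → A → ℝ) (s : S) (a : A) : ℝ :=
  R s a + γ * ∑ s', P s a s' * Vpi P R γ π s'

/-- One-step distribution pushforward under policy `π`. -/
noncomputable def pushOp {S A : Type*} [Fintype S] [Fintype A]
    (P : S → A → S → ℝ) (π : S → A → ℝ) (D : S → ℝ) : S → ℝ :=
  fun s' => ∑ s, ∑ a, D s * π s a * P s a s'

/-- Discounted state visitation distribution
`d^π_μ(s) = (1-γ) ∑_{k≥0} γ^k P^π(S_k = s | S_0 ∼ μ)`. -/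
noncomputable def dvisit {S A : Type*} [Fintype S] [Fintype A]
    (P : S → A → S → ℝ) (γ : ℝ) (π : S → A → ℝ) (μ : S → ℝ) (s : S) : ℝ :=
  (1 - γ) * ∑' k : ℕ, γ ^ k * ((pushOp P π)^[k] μ) s

section helpers
variable {S A : Type*} [Fintype S] [Fintype A]
variable (P : S → A → S → ℝ) (π : S → A → ℝ)

lemma stepOp_nonneg (hP0 : ∀ s a s', 0 ≤ P s a s') (hπ0 : ∀ s a, 0 ≤ π s a)
    {f : S → ℝ} (hf : ∀ s, 0 ≤ f s) (s : S) : 0 ≤ stepOp P π f s :=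
  Finset.sum_nonneg fun a _ => mul_nonneg (hπ0 s a)
    (Finset.sum_nonneg fun s' _ => mul_nonneg (hP0 s a s') (hf s'))

lemma stepOp_le (hP0 : ∀ s a s', 0 ≤ P s a s') (hP1 : ∀ s a, ∑ s', P s a s' = 1)
    (hπ0 : ∀ s a, 0 ≤ π s a) (hπ1 : ∀ s, ∑ a, π s a = 1)
    {f : S → ℝ} {C : ℝ} (hf : ∀ s, f s ≤ C) (s : S) : stepOp P π f s ≤ C := by
  have h1 : ∀ a, ∑ s', P s a s' * f s' ≤ C := fun a => by
    calc ∑ s', P s a s' * f s' ≤ ∑ s', P s a s' * C :=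
          Finset.sum_le_sum fun s' _ => mul_le_mul_of_nonneg_left (hf s') (hP0 s a s')
      _ = C := by rw [← Finset.sum_mul, hP1, one_mul]
  calc stepOp P π f s ≤ ∑ a, π s a * C :=
        Finset.sum_le_sum fun a _ => mul_le_mul_of_nonneg_left (h1 a) (hπ0 s a)
    _ = C := by rw [← Finset.sum_mul, hπ1, one_mul]

lemma iter_bounds (hP0 : ∀ s a s', 0 ≤ P s a s') (hP1 : ∀ s a, ∑ s', P s a s' = 1)
    (hπ0 : ∀ s a, 0 ≤ π s a) (hπ1 : ∀ s, ∑ a, π s a = 1)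
    {f : S → ℝ} {C : ℝ} (hf0 : ∀ s, 0 ≤ f s) (hfC : ∀ s, f s ≤ C) :
    ∀ k s, 0 ≤ (stepOp P π)^[k] f s ∧ (stepOp P π)^[k] f s ≤ C := by
  intro k
  induction k with
  | zero => exact fun s => ⟨hf0 s, hfC s⟩
  | succ k ih =>
    intro s
    rw [Function.iterate_succ_apply']
    exact ⟨stepOp_nonneg P π hP0 hπ0 (fun t => (ih t).1) s,
           stepOp_le P π hP0 hP1 hπ0 hπ1 (fun t => (ih t).2) s⟩

lemma pushOp_nonneg (hP0 : ∀ s a s', 0 ≤ P s a s') (hπ0 : ∀ s a, 0 ≤ π s a)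
    {D : S → ℝ} (hD : ∀ s, 0 ≤ D s) (s' : S) : 0 ≤ pushOp P π D s' :=
  Finset.sum_nonneg fun s _ => Finset.sum_nonneg fun a _ =>
    mul_nonneg (mul_nonneg (hD s) (hπ0 s a)) (hP0 s a s')

lemma pushOp_sum (hP1 : ∀ s a, ∑ s', P s a s' = 1) (hπ1 : ∀ s, ∑ a, π s a = 1)
    {D : S → ℝ} (hD : ∑ s, D s = 1) : ∑ s', pushOp P π D s' = 1 := by
  unfold pushOp
  calc ∑ s', ∑ s, ∑ a, D s * π s a * P s a s'
      = ∑ s, ∑ a, ∑ s', D s * π s a * P s a s' := by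
        rw [Finset.sum_comm]
        exact Finset.sum_congr rfl fun s _ => Finset.sum_comm ..
    _ = ∑ s, D s := by
        refine Finset.sum_congr rfl fun s _ => ?_
        simp only [← Finset.mul_sum, hP1, mul_one]
        rw [hπ1, mul_one]
    _ = 1 := hD

lemma push_iter_dist (hP0 : ∀ s a s', 0 ≤ P s a s') (hP1 : ∀ s a, ∑ s', P s a s' = 1)
    (hπ0 : ∀ s a, 0 ≤ π s a) (hπ1 : ∀ s, ∑ a, π s a = 1)
    {μ : S → ℝ} (hμ0 : ∀ s, 0 ≤ μ s) (hμ1 : ∑ s, μ s = 1) (k : ℕ) :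
    (∀ s, 0 ≤ (pushOp P π)^[k] μ s) ∧ ∑ s, (pushOp P π)^[k] μ s = 1 := by
  induction k with
  | zero => exact ⟨hμ0, hμ1⟩
  | succ k ih =>
    rw [Function.iterate_succ_apply']
    exact ⟨pushOp_nonneg P π hP0 hπ0 ih.1, pushOp_sum P π hP1 hπ1 ih.2⟩

lemma adjoint (D f : S → ℝ) :
    ∑ s', pushOp P π D s' * f s' = ∑ s, D s * stepOp P π f s := by
  unfold pushOp stepOp
  simp only [Finset.sum_mul, Finset.mul_sum]
  rw [Finset.sum_comm]
  refine Finset.sum_congr rfl fun s _ => ?_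
  rw [Finset.sum_comm]
  exact Finset.sum_congr rfl fun a _ => Finset.sum_congr rfl fun s' _ => by ring

lemma pairing (D : S → ℝ) : ∀ (k : ℕ) (f : S → ℝ),
    ∑ s, (pushOp P π)^[k] D s * f s = ∑ s, D s * (stepOp P π)^[k] f s := by
  intro k
  induction k with
  | zero => intro f; rfl
  | succ k ih =>
    intro f
    rw [Function.iterate_succ_apply', adjoint, ih (stepOp P π f)]
    simp only [← Function.iterate_succ_apply]

lemma dist_pair_abs_le {D f : S → ℝ} {C : ℝ} (hD0 : ∀ s, 0 ≤ D s) (hD1 : ∑ s, D s = 1)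
    (_hC : 0 ≤ C) (hf : ∀ s, |f s| ≤ C) : |∑ s, D s * f s| ≤ C := by
  calc |∑ s, D s * f s| ≤ ∑ s, |D s * f s| := Finset.abs_sum_le_sum_abs _ _
    _ ≤ ∑ s, D s * C := by
        refine Finset.sum_le_sum fun s _ => ?_
        rw [abs_mul, abs_of_nonneg (hD0 s)]
        exact mul_le_mul_of_nonneg_left (hf s) (hD0 s)
    _ = C := by rw [← Finset.sum_mul, hD1, one_mul]

end helpers

/-- Performance difference lemma:
`V^{π'}(μ) - V^{π}(μ) = (1/(1-γ)) ∑_{s,a} d^{π'}_μ(s) π'(a|s) [Q^π(s,a) - V^π(s)]`. -/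
theorem performance_difference {S A : Type*} [Fintype S] [Fintype A]
    (P : S → A → S → ℝ) (hP0 : ∀ s a s', 0 ≤ P s a s') (hP1 : ∀ s a, ∑ s', P s a s' = 1)
    (R : S → A → ℝ) (hR0 : ∀ s a, 0 ≤ R s a) (hR1 : ∀ s a, R s a ≤ 1)
    (γ : ℝ) (hγ0 : 0 < γ) (hγ1 : γ < 1)
    (π π' : S → A → ℝ)
    (hπ0 : ∀ s a, 0 ≤ π s a) (hπ1 : ∀ s, ∑ a, π s a = 1)
    (hπ'0 : ∀ s a, 0 ≤ π' s a) (hπ'1 : ∀ s, ∑ a, π' s a = 1)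
    (μ : S → ℝ) (hμ0 : ∀ s, 0 ≤ μ s) (hμ1 : ∑ s, μ s = 1) :
    (∑ s, μ s * Vpi P R γ π' s) - (∑ s, μ s * Vpi P R γ π s)
      = (1 / (1 - γ)) * ∑ s, ∑ a, dvisit P γ π' μ s * π' s a *
          (Qpi P R γ π s a - Vpi P R γ π s) := by
  have hγne : (1:ℝ) - γ ≠ 0 := by linarith
  have hig : (0:ℝ) ≤ (1-γ)⁻¹ := inv_nonneg.2 (by linarith)
  have hg : Summable fun k : ℕ => γ ^ k := summable_geometric_of_lt_one hγ0.le hγ1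
  have hgk : ∀ k : ℕ, (0:ℝ) ≤ γ ^ k := fun k => pow_nonneg hγ0.le k
  -- reward functions
  set r : S → ℝ := fun t => ∑ a, π t a * R t a with hrdef
  set r' : S → ℝ := fun t => ∑ a, π' t a * R t a with hr'def
  have hr01 : ∀ (ρ : S → A → ℝ), (∀ s a, 0 ≤ ρ s a) → (∀ s, ∑ a, ρ s a = 1) →
      (∀ s, 0 ≤ ∑ a, ρ s a * R s a) ∧ (∀ s, ∑ a, ρ s a * R s a ≤ 1) := by
    intro ρ h0 h1
    constructor
    · exact fun s => Finset.sum_nonneg fun a _ => mul_nonneg (h0 s a) (hR0 s a)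
    · intro s
      calc ∑ a, ρ s a * R s a ≤ ∑ a, ρ s a * 1 :=
            Finset.sum_le_sum fun a _ => mul_le_mul_of_nonneg_left (hR1 s a) (h0 s a)
        _ = 1 := by simp [h1 s]
  obtain ⟨hr0, hr1⟩ := hr01 π hπ0 hπ1
  obtain ⟨hr'0, hr'1⟩ := hr01 π' hπ'0 hπ'1
  -- bounds on iterates
  have hit : ∀ k s, 0 ≤ (stepOp P π)^[k] r s ∧ (stepOp P π)^[k] r s ≤ 1 :=
    iter_bounds P π hP0 hP1 hπ0 hπ1 hr0 hr1
  have hit' : ∀ k s, 0 ≤ (stepOp P π')^[k] r' s ∧ (stepOp P π')^[k] r' s ≤ 1 :=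
    iter_bounds P π' hP0 hP1 hπ'0 hπ'1 hr'0 hr'1
  -- summability of value series
  have hVsum : ∀ s, Summable fun k : ℕ => γ ^ k * (stepOp P π)^[k] r s := by
    intro s
    refine Summable.of_nonneg_of_le (fun k => mul_nonneg (hgk k) (hit k s).1)
      (fun k => ?_) hg
    calc γ ^ k * (stepOp P π)^[k] r s ≤ γ ^ k * 1 :=
          mul_le_mul_of_nonneg_left (hit k s).2 (hgk k)
      _ = γ ^ k := mul_one _
  have hVsum' : ∀ s, Summable fun k : ℕ => γ ^ k * (stepOp P π')^[k] r' s := by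
    intro s
    refine Summable.of_nonneg_of_le (fun k => mul_nonneg (hgk k) (hit' k s).1)
      (fun k => ?_) hg
    calc γ ^ k * (stepOp P π')^[k] r' s ≤ γ ^ k * 1 :=
          mul_le_mul_of_nonneg_left (hit' k s).2 (hgk k)
      _ = γ ^ k := mul_one _
  -- value bounds
  set V : S → ℝ := Vpi P R γ π with hVdef
  have hV0 : ∀ s, 0 ≤ V s := fun s =>
    tsum_nonneg fun k => mul_nonneg (hgk k) (hit k s).1
  have hV1 : ∀ s, V s ≤ (1-γ)⁻¹ := by
    intro s
    calc V s ≤ ∑' k : ℕ, γ ^ k := by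
          refine Summable.tsum_le_tsum (fun k => ?_) (hVsum s) hg
          calc γ ^ k * (stepOp P π)^[k] r s ≤ γ ^ k * 1 :=
                mul_le_mul_of_nonneg_left (hit k s).2 (hgk k)
            _ = γ ^ k := mul_one _
      _ = (1-γ)⁻¹ := tsum_geometric_of_lt_one hγ0.le hγ1
  have hVabs : ∀ s, |V s| ≤ (1-γ)⁻¹ := fun s => abs_le.2 ⟨by linarith [hV0 s, hig], hV1 s⟩
  -- step of V bounds
  have hsV0 : ∀ s, 0 ≤ stepOp P π' V s := stepOp_nonneg P π' hP0 hπ'0 hV0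
  have hsV1 : ∀ s, stepOp P π' V s ≤ (1-γ)⁻¹ := stepOp_le P π' hP0 hP1 hπ'0 hπ'1 hV1
  -- advantage function
  set Adv : S → ℝ := fun s => r' s + γ * stepOp P π' V s - V s with hAdef
  set CA : ℝ := 1 + γ * (1-γ)⁻¹ + (1-γ)⁻¹ with hCAdef
  have hCA0 : 0 ≤ CA := by positivity
  have hAabs : ∀ s, |Adv s| ≤ CA := by
    intro s
    have h1 : |r' s| ≤ 1 := abs_le.2 ⟨by linarith [hr'0 s], hr'1 s⟩
    have h2 : |γ * stepOp P π' V s| ≤ γ * (1-γ)⁻¹ := by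
      rw [abs_mul, abs_of_pos hγ0]
      exact mul_le_mul_of_nonneg_left (abs_le.2 ⟨by linarith [hsV0 s], hsV1 s⟩) hγ0.le
    calc |Adv s| ≤ |r' s + γ * stepOp P π' V s| + |V s| := abs_sub _ _
      _ ≤ |r' s| + |γ * stepOp P π' V s| + |V s| := by
          have := abs_add_le (r' s) (γ * stepOp P π' V s); linarith [hVabs s]
      _ ≤ CA := by simp only [hCAdef]; linarith [hVabs s]
  -- visitation iterates are distributions
  have hDd : ∀ k, (∀ s, 0 ≤ (pushOp P π')^[k] μ s) ∧ ∑ s, (pushOp P π')^[k] μ s = 1 :=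
    push_iter_dist P π' hP0 hP1 hπ'0 hπ'1 hμ0 hμ1
  have hDle1 : ∀ k s, (pushOp P π')^[k] μ s ≤ 1 := by
    intro k s
    calc (pushOp P π')^[k] μ s ≤ ∑ t, (pushOp P π')^[k] μ t :=
          Finset.single_le_sum (fun t _ => (hDd k).1 t) (Finset.mem_univ s)
      _ = 1 := (hDd k).2
  -- key sequences
  set a : ℕ → ℝ := fun k => γ ^ k * ∑ s, (pushOp P π')^[k] μ s * r' s with hadef
  set u : ℕ → ℝ := fun k => γ ^ k * ∑ s, (pushOp P π')^[k] μ s * V s with hudef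
  have hbnd : ∀ (f : S → ℝ) (C : ℝ), 0 ≤ C → (∀ s, |f s| ≤ C) →
      ∀ k, |γ ^ k * ∑ s, (pushOp P π')^[k] μ s * f s| ≤ C * γ ^ k := by
    intro f C hC hf k
    rw [abs_mul, abs_pow, abs_of_pos hγ0, mul_comm]
    exact mul_le_mul_of_nonneg_right
      (dist_pair_abs_le (hDd k).1 (hDd k).2 hC hf) (hgk k)
  have ha : Summable a := by
    refine Summable.of_norm_bounded (hg.mul_left 1) ?_
    exact hbnd r' 1 zero_le_one (fun s => abs_le.2 ⟨by linarith [hr'0 s], hr'1 s⟩)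
  have hu : Summable u := by
    refine Summable.of_norm_bounded (hg.mul_left (1-γ)⁻¹) ?_
    exact hbnd V (1-γ)⁻¹ hig hVabs
  have husucc : Summable fun k => u (k+1) := (summable_nat_add_iff 1).2 hu
  -- Step 1: pointwise inner-sum identity
  have hinner : ∀ s, ∑ x, dvisit P γ π' μ s * π' s x * (Qpi P R γ π s x - V s)
      = dvisit P γ π' μ s * Adv s := by
    intro s
    have h1 : ∑ x, π' s x * Qpi P R γ π s x = r' s + γ * stepOp P π' V s := by
      unfold Qpi stepOp
      rw [Finset.sum_congr rfl (fun x _ => mul_add (π' s x) (R s x) _),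
          Finset.sum_add_distrib]
      congr 1
      rw [Finset.mul_sum]
      exact Finset.sum_congr rfl fun x _ => by ring
    have h2 : ∀ x, dvisit P γ π' μ s * π' s x * (Qpi P R γ π s x - V s)
        = dvisit P γ π' μ s * (π' s x * Qpi P R γ π s x)
          - dvisit P γ π' μ s * V s * π' s x := fun x => by ring
    rw [Finset.sum_congr rfl fun x _ => h2 x, Finset.sum_sub_distrib,
        ← Finset.mul_sum, ← Finset.mul_sum, h1, hπ'1 s]
    simp only [hAdef]
    ring
  -- Step 2: key telescoping identity
  have hadj : ∀ k, ∑ s, (pushOp P π')^[k] μ s * stepOp P π' V s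
      = ∑ s, (pushOp P π')^[k+1] μ s * V s := by
    intro k
    rw [Function.iterate_succ_apply', adjoint]
  have hkey : ∀ k, γ ^ k * ∑ s, (pushOp P π')^[k] μ s * Adv s = a k + u (k+1) - u k := by
    intro k
    have hsplit : ∑ s, (pushOp P π')^[k] μ s * Adv s
        = (∑ s, (pushOp P π')^[k] μ s * r' s)
          + γ * (∑ s, (pushOp P π')^[k] μ s * stepOp P π' V s)
          - ∑ s, (pushOp P π')^[k] μ s * V s := by
      rw [Finset.mul_sum, ← Finset.sum_add_distrib, ← Finset.sum_sub_distrib]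
      refine Finset.sum_congr rfl fun s _ => ?_
      simp only [hAdef]; ring
    rw [hsplit, hadj k]
    simp only [hadef, hudef]
    ring
  -- summability of the Adv series
  have hAserS : Summable fun k => γ ^ k * ∑ s, (pushOp P π')^[k] μ s * Adv s := by
    refine Summable.of_norm_bounded (hg.mul_left CA) (hbnd Adv CA hCA0 hAabs)
  have hAserPt : ∀ s, Summable fun k : ℕ => γ ^ k * (pushOp P π')^[k] μ s * Adv s := by
    intro s
    refine Summable.of_norm_bounded (hg.mul_left CA) (fun k => ?_)
    rw [Real.norm_eq_abs, abs_mul, abs_mul, abs_pow, abs_of_pos hγ0,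
        abs_of_nonneg ((hDd k).1 s)]
    calc γ ^ k * (pushOp P π')^[k] μ s * |Adv s| ≤ γ ^ k * 1 * CA := by
          refine mul_le_mul ?_ (hAabs s) (abs_nonneg _) (by positivity)
          exact mul_le_mul_of_nonneg_left (hDle1 k s) (hgk k)
      _ = CA * γ ^ k := by ring
  -- Step 3: RHS equals ∑' k, γ^k ⟨Dk, Adv⟩
  have hRHS : (1 / (1 - γ)) * ∑ s, ∑ x, dvisit P γ π' μ s * π' s x *
        (Qpi P R γ π s x - V s)
      = ∑' k : ℕ, γ ^ k * ∑ s, (pushOp P π')^[k] μ s * Adv s := by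
    rw [Finset.sum_congr rfl fun s _ => hinner s]
    have hd : ∀ s, dvisit P γ π' μ s * Adv s
        = (1 - γ) * ∑' k : ℕ, γ ^ k * (pushOp P π')^[k] μ s * Adv s := by
      intro s
      unfold dvisit
      rw [mul_assoc, ← tsum_mul_right]
    rw [Finset.sum_congr rfl fun s _ => hd s, ← Finset.mul_sum, one_div,
        ← mul_assoc, inv_mul_cancel₀ hγne, one_mul]
    rw [← Summable.tsum_finsetSum fun s _ => hAserPt s]
    refine tsum_congr fun k => ?_
    rw [Finset.mul_sum]
    exact Finset.sum_congr rfl fun s _ => by ring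
  -- Step 4: LHS first term equals ∑' a
  have hLHS1 : ∑ s, μ s * Vpi P R γ π' s = ∑' k, a k := by
    have h1 : ∀ s, μ s * Vpi P R γ π' s
        = ∑' k : ℕ, μ s * (γ ^ k * (stepOp P π')^[k] r' s) := by
      intro s
      unfold Vpi
      rw [← tsum_mul_left]
    rw [Finset.sum_congr rfl fun s _ => h1 s,
        ← Summable.tsum_finsetSum fun s _ => ((hVsum' s).mul_left (μ s))]
    refine tsum_congr fun k => ?_
    simp only [hadef]
    rw [pairing P π' μ k r', Finset.mul_sum]
    exact Finset.sum_congr rfl fun s _ => by ring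
  -- Step 5: LHS second term equals u 0
  have hLHS2 : ∑ s, μ s * V s = u 0 := by
    simp only [hudef, pow_zero, one_mul, Function.iterate_zero_apply]
  -- telescoping
  have htel : ∑' k : ℕ, γ ^ k * ∑ s, (pushOp P π')^[k] μ s * Adv s
      = (∑' k, a k) - u 0 := by
    rw [tsum_congr hkey]
    have : ∀ k, a k + u (k+1) - u k = a k + (u (k+1) - u k) := fun k => by ring
    rw [tsum_congr this, Summable.tsum_add ha (husucc.sub hu), Summable.tsum_sub husucc hu]
    have h0 := Summable.tsum_eq_zero_add hu
    linarith
  rw [hLHS1, hLHS2, hRHS, htel]
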